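/- Let ρ > 0 and h₁, h₂ > 0. Then the lower bound L = (1+ρh₁)(√(1+ρh₂) − 1)/(ρh₂ + ρh₁(√(1+ρh₂) − 1)) and the upper bound U = √(1+ρh₁)·(√(1+ρh₁) − 1)/(ρh₁) satisfy L ≤ U whenever h₁ ≤ h₂, i.e., the feasible set of the power allocation problem is nonempty. -/
import Mathlib


theorem stmt_16 (ρ h₁ h₂ : ℝ) (hρ : 0 < ρ) (h1 : 0 < h₁) (h2 : 0 < h₂) (h12 : h₁ ≤ h₂) :
    (1 + ρ * h₁) * (Real.sqrt (1 + ρ * h₂) - 1) /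
        (ρ * h₂ + ρ * h₁ * (Real.sqrt (1 + ρ * h₂) - 1)) ≤
      Real.sqrt (1 + ρ * h₁) * (Real.sqrt (1 + ρ * h₁) - 1) / (ρ * h₁) := by
  set a := Real.sqrt (1 + ρ * h₁) with hadef
  set b := Real.sqrt (1 + ρ * h₂) with hbdef
  have ha2 : a ^ 2 = 1 + ρ * h₁ := Real.sq_sqrt (by positivity)
  have hb2 : b ^ 2 = 1 + ρ * h₂ := Real.sq_sqrt (by positivity)
  have ha0 : 0 ≤ a := Real.sqrt_nonneg _
  have hb0 : 0 ≤ b := Real.sqrt_nonneg _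
  have ha1 : 1 < a := by nlinarith
  have hb1 : 1 < b := by nlinarith
  have hab : a ≤ b := Real.sqrt_le_sqrt (by nlinarith)
  have hd1 : 0 < ρ * h₂ + ρ * h₁ * (b - 1) := by
    have : 0 < ρ * h₂ := by positivity
    nlinarith
  have hd2 : 0 < ρ * h₁ := by positivity
  rw [div_le_div_iff₀ hd1 hd2]
  have hrh1 : ρ * h₁ = a ^ 2 - 1 := by linarith
  have hrh2 : ρ * h₂ = b ^ 2 - 1 := by linarith
  rw [hrh1, hrh2]
  nlinarith [mul_pos (sub_pos.mpr ha1) (sub_pos.mpr hb1), sq_nonneg (a - b),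
    mul_nonneg (mul_nonneg (sub_pos.mpr ha1).le (sub_pos.mpr hb1).le) (sub_nonneg.mpr hab),
    mul_pos (mul_pos (sub_pos.mpr ha1) (sub_pos.mpr hb1)) (lt_trans one_pos ha1)]
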